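/- Fix ε > 0 and define F : ℝ² → ℝ by F(w,v) = (1/2)·(w·(1 + ε·v) − 1)². Then at the point (w,v) = (0, −1/ε): (i) the gradient of F vanishes, ∇F(0,−1/ε) = (0,0); (ii) the Hessian of F equals [[0, −ε],[−ε, 0]], whose eigenvalues are ±ε; and (iii) F(0,−1/ε) = 1/2, whereas the linear predictor w* = 1 achieves F_lin(1) := (1/2)·(1·1 − 1)² = 0. Consequently, for arbitrarily small ε there exist points whose gradient is zero and whose Hessian has operator norm ε, yet whose objective value exceeds that of the best linear predictor by 1/2. -/

import Mathlib

open scoped RealInnerProductSpace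

noncomputable section

/-- The objective `F(w,v) = (1/2)·(w(1+εv) − 1)²` of Example 1 of the paper,
as a function on `ℝ²` (coordinates: `z 0 = w`, `z 1 = v`). -/
def exF (ε : ℝ) (z : EuclideanSpace ℝ (Fin 2)) : ℝ :=
  (1 / 2) * (z 0 * (1 + ε * z 1) - 1) ^ 2

/-- The point `(w,v) = (0, −1/ε)`. -/
def exPt (ε : ℝ) : EuclideanSpace ℝ (Fin 2) :=
  (EuclideanSpace.equiv (Fin 2) ℝ).symm ![0, -1 / ε]

/-- The Hessian matrix of second partial derivatives of `F`. -/
def hessianMatrix {ι : Type} [Fintype ι] [DecidableEq ι] (F : EuclideanSpace ℝ ι → ℝ)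
    (z : EuclideanSpace ℝ ι) : Matrix ι ι ℝ :=
  Matrix.of fun p q =>
    fderiv ℝ (fun v => fderiv ℝ F v (EuclideanSpace.single q 1)) z (EuclideanSpace.single p 1)

def P0 : EuclideanSpace ℝ (Fin 2) →L[ℝ] ℝ := EuclideanSpace.proj 0
def P1 : EuclideanSpace ℝ (Fin 2) →L[ℝ] ℝ := EuclideanSpace.proj 1

lemma hδ (ε : ℝ) (v : EuclideanSpace ℝ (Fin 2)) :
    HasFDerivAt (fun z : EuclideanSpace ℝ (Fin 2) => 1 + ε * z 1) (ε • P1) v := by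
  have := (P1.hasFDerivAt (x := v)).const_mul ε
  exact this.const_add 1

lemma hg (ε : ℝ) (v : EuclideanSpace ℝ (Fin 2)) :
    HasFDerivAt (fun z : EuclideanSpace ℝ (Fin 2) => z 0 * (1 + ε * z 1) - 1)
      (v 0 • (ε • P1) + (1 + ε * v 1) • P0) v :=
  ((P0.hasFDerivAt.mul (hδ ε v)).sub_const 1)

lemma hF (ε : ℝ) (v : EuclideanSpace ℝ (Fin 2)) :
    HasFDerivAt (exF ε)
      ((v 0 * (1 + ε * v 1) - 1) • (v 0 • (ε • P1) + (1 + ε * v 1) • P0)) v := by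
  have h := (((hg ε v).fun_mul (hg ε v)).const_mul (1/2))
  have hfun : exF ε = fun z : EuclideanSpace ℝ (Fin 2) =>
      (1/2) * ((z 0 * (1 + ε * z 1) - 1) * (z 0 * (1 + ε * z 1) - 1)) := by
    funext z; simp [exF]; ring
  rw [hfun]
  apply h.congr_fderiv
  ext h'
  simp
  ring

lemma partial0 (ε : ℝ) :
    (fun v : EuclideanSpace ℝ (Fin 2) => fderiv ℝ (exF ε) v (EuclideanSpace.single 0 1)) =
      fun v : EuclideanSpace ℝ (Fin 2) => (v 0 * (1 + ε * v 1) - 1) * (1 + ε * v 1) := by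
  funext v
  rw [(hF ε v).fderiv]
  simp [P0, P1, EuclideanSpace.single_apply]

lemma partial1 (ε : ℝ) :
    (fun v : EuclideanSpace ℝ (Fin 2) => fderiv ℝ (exF ε) v (EuclideanSpace.single 1 1)) =
      fun v : EuclideanSpace ℝ (Fin 2) => (v 0 * (1 + ε * v 1) - 1) * (v 0 * ε) := by
  funext v
  rw [(hF ε v).fderiv]
  simp [P0, P1, EuclideanSpace.single_apply]

lemma exPt0 (ε : ℝ) : exPt ε 0 = 0 := rfl
lemma exPt1 (ε : ℝ) : exPt ε 1 = -1 / ε := rfl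

lemma hdelta0 (ε : ℝ) (hε : ε ≠ 0) : 1 + ε * exPt ε 1 = 0 := by
  rw [exPt1]; field_simp; norm_num

lemma P0_apply (v : EuclideanSpace ℝ (Fin 2)) : P0 v = v 0 := rfl

lemma hess (ε : ℝ) (hε : ε ≠ 0) :
    hessianMatrix (exF ε) (exPt ε) = Matrix.of ![![0, -ε], ![-ε, 0]] := by
  have H0 := (hg ε (exPt ε)).fun_mul (hδ ε (exPt ε))
  have H1 := (hg ε (exPt ε)).fun_mul (P0.hasFDerivAt.mul_const ε)
  have hgv : exPt ε 0 * (1 + ε * exPt ε 1) - 1 = -1 := by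
    rw [exPt0]; ring
  simp only [P0_apply] at H1
  rw [hgv] at H0 H1
  rw [hdelta0 ε hε] at H0 H1
  rw [exPt0] at H0 H1
  ext p q
  fin_cases p <;> fin_cases q
  · show fderiv ℝ (fun v => fderiv ℝ (exF ε) v (EuclideanSpace.single 0 1)) (exPt ε)
      (EuclideanSpace.single 0 1) = (0 : ℝ)
    rw [partial0 ε, H0.fderiv]; simp [P0, P1, EuclideanSpace.single_apply]
  · show fderiv ℝ (fun v => fderiv ℝ (exF ε) v (EuclideanSpace.single 1 1)) (exPt ε)
      (EuclideanSpace.single 0 1) = -ε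
    rw [partial1 ε, H1.fderiv]; simp [P0, P1, EuclideanSpace.single_apply]
  · show fderiv ℝ (fun v => fderiv ℝ (exF ε) v (EuclideanSpace.single 0 1)) (exPt ε)
      (EuclideanSpace.single 1 1) = -ε
    rw [partial0 ε, H0.fderiv]; simp [P0, P1, EuclideanSpace.single_apply]
  · show fderiv ℝ (fun v => fderiv ℝ (exF ε) v (EuclideanSpace.single 1 1)) (exPt ε)
      (EuclideanSpace.single 1 1) = (0 : ℝ)
    rw [partial1 ε, H1.fderiv]; simp [P0, P1, EuclideanSpace.single_apply]

/-- Example 1 of the paper: at `(w,v) = (0, −1/ε)` the gradient of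
`F(w,v) = (1/2)(w(1+εv)−1)²` vanishes, the Hessian is `[[0,−ε],[−ε,0]]` with eigenvalues
`±ε`, yet `F(0,−1/ε) = 1/2 > 0 = F_lin(1)`. -/
theorem example_bad_approximate_stationary_point (ε : ℝ) (hε : 0 < ε) :
    gradient (exF ε) (exPt ε) = 0 ∧
      hessianMatrix (exF ε) (exPt ε) = Matrix.of ![![0, -ε], ![-ε, 0]] ∧
      Module.End.HasEigenvalue (Matrix.toEuclideanLin (hessianMatrix (exF ε) (exPt ε))) ε ∧
      Module.End.HasEigenvalue (Matrix.toEuclideanLin (hessianMatrix (exF ε) (exPt ε))) (-ε) ∧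
      exF ε (exPt ε) = 1 / 2 ∧
      (1 / 2 : ℝ) * ((1 : ℝ) * 1 - 1) ^ 2 = 0 := by
  have hε' : ε ≠ 0 := ne_of_gt hε
  have hM := hess ε hε'
  refine ⟨?_, hM, ?_, ?_, ?_, by norm_num⟩
  · have h := hF ε (exPt ε)
    rw [hdelta0 ε hε', exPt0] at h
    simp only [zero_smul, add_zero, zero_add, smul_zero] at h
    have : HasGradientAt (exF ε) 0 (exPt ε) := by
      rw [hasGradientAt_iff_hasFDerivAt, map_zero]
      exact h
    exact this.gradient
  · rw [hM]
    apply Module.End.hasEigenvalue_of_hasEigenvector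
      (x := (WithLp.equiv 2 (Fin 2 → ℝ)).symm ![1, -1])
    constructor
    · rw [Module.End.mem_eigenspace_iff, WithLp.equiv_symm_apply, Matrix.toEuclideanLin_apply_piLp_toLp,
        ← WithLp.toLp_smul]
      congr 1
      funext i
      fin_cases i <;> simp [Matrix.mulVec, dotProduct, Fin.sum_univ_two]
    · intro h
      have := congrArg (fun z : EuclideanSpace ℝ (Fin 2) => z 0) h
      simp at this
  · rw [hM]
    apply Module.End.hasEigenvalue_of_hasEigenvector
      (x := (WithLp.equiv 2 (Fin 2 → ℝ)).symm ![1, 1])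
    constructor
    · rw [Module.End.mem_eigenspace_iff, WithLp.equiv_symm_apply, Matrix.toEuclideanLin_apply_piLp_toLp,
        ← WithLp.toLp_smul]
      congr 1
      funext i
      fin_cases i <;> simp [Matrix.mulVec, dotProduct, Fin.sum_univ_two]
    · intro h
      have := congrArg (fun z : EuclideanSpace ℝ (Fin 2) => z 0) h
      simp at this
  · show (1/2 : ℝ) * (exPt ε 0 * (1 + ε * exPt ε 1) - 1) ^ 2 = 1 / 2
    rw [hdelta0 ε hε', exPt0]
    norm_num

end
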